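/- Let f : ℝⁿ → ℝ be differentiable with L-Lipschitz gradient, bounded below by f* ∈ ℝ, and let zᵏ⁺¹ = zᵏ − β∇f(zᵏ) with 0 < β ≤ 1/L. Then ∑_{k=0}^{∞} ‖∇f(zᵏ)‖² < ∞, and in particular ‖∇f(zᵏ)‖ → 0 as k → ∞. -/

import Mathlib

open InnerProductSpace

lemma descent_lemma {n : ℕ} (f : EuclideanSpace ℝ (Fin n) → ℝ) (L : ℝ)
    (hf : Differentiable ℝ f)
    (hlip : ∀ x y, ‖gradient f x - gradient f y‖ ≤ L * ‖x - y‖)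
    (hL : 0 ≤ L) (x v : EuclideanSpace ℝ (Fin n)) :
    f (x + v) ≤ f x + ⟪gradient f x, v⟫_ℝ + L / 2 * ‖v‖ ^ 2 := by
  set g : ℝ → ℝ := fun t => f (x + t • v) - t * ⟪gradient f x, v⟫_ℝ - L / 2 * t ^ 2 * ‖v‖ ^ 2
    with hg
  have hderiv : ∀ t : ℝ, HasDerivAt g
      (⟪gradient f (x + t • v), v⟫_ℝ - ⟪gradient f x, v⟫_ℝ - L * t * ‖v‖ ^ 2) t := by
    intro t
    have hc : HasDerivAt (fun t : ℝ => x + t • v) v t := by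
      simpa using ((hasDerivAt_id t).smul_const v).const_add x
    have hF : HasFDerivAt f (toDual ℝ (EuclideanSpace ℝ (Fin n)) (gradient f (x + t • v))) (x + t • v) :=
      (hf (x + t • v)).hasGradientAt.hasFDerivAt
    have h1 : HasDerivAt (fun t : ℝ => f (x + t • v)) (⟪gradient f (x + t • v), v⟫_ℝ) t := by
      have := hF.comp_hasDerivAt t hc
      simpa [Function.comp_def] using this
    have h2 : HasDerivAt (fun t : ℝ => t * ⟪gradient f x, v⟫_ℝ) (⟪gradient f x, v⟫_ℝ) t := by
      simpa using (hasDerivAt_id t).mul_const (⟪gradient f x, v⟫_ℝ)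
    have h3 : HasDerivAt (fun t : ℝ => L / 2 * t ^ 2 * ‖v‖ ^ 2) (L * t * ‖v‖ ^ 2) t := by
      have := ((hasDerivAt_pow 2 t).const_mul (L / 2)).mul_const (‖v‖ ^ 2)
      convert this using 1
      · rfl
      · rfl
      ring
    exact (h1.sub h2).sub h3
  have hanti : AntitoneOn g (Set.Icc (0:ℝ) 1) := by
    apply antitoneOn_of_deriv_nonpos (convex_Icc 0 1)
    · exact (Differentiable.continuous (fun t => (hderiv t).differentiableAt)).continuousOn
    · exact fun t _ => ((hderiv t).differentiableAt).differentiableWithinAt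
    · intro t ht
      rw [interior_Icc] at ht
      rw [(hderiv t).deriv]
      have h1 : ⟪gradient f (x + t • v), v⟫_ℝ - ⟪gradient f x, v⟫_ℝ
          = ⟪gradient f (x + t • v) - gradient f x, v⟫_ℝ := by
        rw [inner_sub_left]
      rw [h1]
      have h2 : ⟪gradient f (x + t • v) - gradient f x, v⟫_ℝ
          ≤ ‖gradient f (x + t • v) - gradient f x‖ * ‖v‖ := real_inner_le_norm _ _
      have h3 : ‖gradient f (x + t • v) - gradient f x‖ ≤ L * (t * ‖v‖) := by
        have := hlip (x + t • v) x
        simpa [norm_smul, abs_of_pos ht.1] using this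
      nlinarith [norm_nonneg v, ht.1.le]
  have := hanti (Set.left_mem_Icc.2 zero_le_one) (Set.right_mem_Icc.2 zero_le_one) zero_le_one
  norm_num [hg, one_smul, zero_smul] at this ⊢
  linarith

theorem gradient_descent_grad_square_summable (n : ℕ)
    (f : EuclideanSpace ℝ (Fin n) → ℝ) (L β fstar : ℝ)
    (hf : Differentiable ℝ f)
    (hlip : ∀ x y, ‖gradient f x - gradient f y‖ ≤ L * ‖x - y‖)
    (hbdd : ∀ x, fstar ≤ f x)
    (hβ : 0 < β) (hβL : β ≤ 1 / L)
    (z : ℕ → EuclideanSpace ℝ (Fin n))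
    (hz : ∀ k, z (k + 1) = z k - β • gradient f (z k)) :
    Summable (fun k => ‖gradient f (z k)‖ ^ 2) ∧
      Filter.Tendsto (fun k => ‖gradient f (z k)‖) Filter.atTop (nhds 0) := by
  have hL : 0 < L := by
    by_contra h
    push_neg at h
    have : 1 / L ≤ 0 := one_div_nonpos.2 h
    linarith
  -- per-step decrease
  have hstep : ∀ k, β / 2 * ‖gradient f (z k)‖ ^ 2 ≤ f (z k) - f (z (k + 1)) := by
    intro k
    have hd := descent_lemma f L hf hlip hL.le (z k) (-(β • gradient f (z k)))
    have hzk : z (k + 1) = z k + -(β • gradient f (z k)) := by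
      rw [hz k]; abel
    rw [← hzk] at hd
    have hinner : ⟪gradient f (z k), -(β • gradient f (z k))⟫_ℝ
        = -(β * ‖gradient f (z k)‖ ^ 2) := by
      rw [inner_neg_right, real_inner_smul_right, real_inner_self_eq_norm_sq]
    rw [hinner, norm_neg, norm_smul] at hd
    have hβL' : L * β ≤ 1 := by
      rw [le_div_iff₀ hL] at hβL; linarith
    have hn := norm_nonneg (gradient f (z k))
    have habs : |β| = β := abs_of_pos hβ
    rw [Real.norm_eq_abs, habs] at hd
    nlinarith
  have hnonneg : ∀ k, 0 ≤ β / 2 * ‖gradient f (z k)‖ ^ 2 := fun k => by positivity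
  have hsum : Summable (fun k => β / 2 * ‖gradient f (z k)‖ ^ 2) := by
    apply summable_of_sum_range_le hnonneg (c := f (z 0) - fstar)
    intro N
    have htel : ∀ N, (∑ k ∈ Finset.range N, (f (z k) - f (z (k + 1))))
        = f (z 0) - f (z N) := by
      intro N
      induction N with
      | zero => simp
      | succ m ih => rw [Finset.sum_range_succ, ih]; ring
    calc (∑ k ∈ Finset.range N, β / 2 * ‖gradient f (z k)‖ ^ 2)
        ≤ ∑ k ∈ Finset.range N, (f (z k) - f (z (k + 1))) :=
          Finset.sum_le_sum fun k _ => hstep k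
      _ = f (z 0) - f (z N) := htel N
      _ ≤ f (z 0) - fstar := by linarith [hbdd (z N)]
  have hsum2 : Summable (fun k => ‖gradient f (z k)‖ ^ 2) := by
    have := hsum.mul_left (2 / β)
    convert this using 2 with k
    · rfl
    field_simp
  refine ⟨hsum2, ?_⟩
  have h0 := hsum2.tendsto_atTop_zero
  have hsqrt : Filter.Tendsto (fun k => Real.sqrt (‖gradient f (z k)‖ ^ 2))
      Filter.atTop (nhds (Real.sqrt 0)) := (Real.continuous_sqrt.tendsto 0).comp h0
  simpa [Real.sqrt_sq (norm_nonneg _), Real.sqrt_zero] using hsqrt
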